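/- Let G be a finite simple graph with maximum degree at most Δmax, let c be a proper partial edge colouring of G with colour set {1,…,Δmax+1}, let uv be an edge of G that is uncoloured under c, and let κ1 ∈ A(u) and κ2 ∈ A(v) be colours. Then there exist an integer k ≥ 1, pairwise distinct vertices w_1,…,w_k all adjacent to u with w_1 = v, and colours α_1,…,α_k ∈ {1,…,Δmax+1}, such that: α_i ∈ A(w_i) for every 1 ≤ i ≤ k; α_i ≠ κ2 for every 1 ≤ i ≤ k−1; for every 1 ≤ i ≤ k−1 the edge u w_{i+1} is coloured and c(u w_{i+1}) = α_i; and at least one of the following holds: (1) α_k ∈ A(u); (2) α_k = α_j for some 1 ≤ j < k; (3) α_k = κ2, w_k ≠ v, and no edge u w_i (1 ≤ i ≤ k) is coloured κ2. -/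

import Mathlib

open Finset

def ProperPartial {V : Type*} (G : SimpleGraph V) (c : Sym2 V → Option ℕ) : Prop :=
  ∀ u v w κ, G.Adj u v → G.Adj u w → v ≠ w → c s(u, v) = some κ → c s(u, w) ≠ some κ

def avail {V : Type*} (G : SimpleGraph V) (Δmax : ℕ) (c : Sym2 V → Option ℕ) (x : V) :
    Set ℕ :=
  {κ | κ ∈ Finset.Icc 1 (Δmax + 1) ∧ ∀ y, G.Adj x y → c s(x, y) ≠ some κ}

section Aux

variable {V : Type*} [Fintype V] [DecidableEq V] (G : SimpleGraph V) [DecidableRel G.Adj]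
  (Δmax : ℕ) (c : Sym2 V → Option ℕ)

lemma availF_card_ge (x : V) (m : ℕ)
    (h : ((G.neighborFinset x).filter (fun y => (c s(x, y)).isSome)).card + m ≤ Δmax + 1) :
    m ≤ ((Finset.Icc 1 (Δmax + 1)).filter
      (fun κ => ∀ y ∈ G.neighborFinset x, c s(x, y) ≠ some κ)).card := by
  classical
  have hsplit := Finset.card_filter_add_card_filter_not
    (s := Finset.Icc 1 (Δmax + 1))
    (p := fun κ => ∀ y ∈ G.neighborFinset x, c s(x, y) ≠ some κ)
  have hsub : (Finset.Icc 1 (Δmax + 1)).filter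
      (fun κ => ¬ ∀ y ∈ G.neighborFinset x, c s(x, y) ≠ some κ) ⊆
      ((G.neighborFinset x).filter (fun y => (c s(x, y)).isSome)).image
        (fun y => (c s(x, y)).getD 0) := by
    intro κ hκ
    simp only [Finset.mem_filter] at hκ
    obtain ⟨-, hκ⟩ := hκ
    push_neg at hκ
    obtain ⟨y, hy, hc⟩ := hκ
    exact Finset.mem_image.mpr ⟨y, Finset.mem_filter.mpr ⟨hy, by simp [hc]⟩, by simp [hc]⟩
  have h1 := Finset.card_le_card hsub
  have h2 := Finset.card_image_le
    (s := (G.neighborFinset x).filter (fun y => (c s(x, y)).isSome))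
    (f := fun y => (c s(x, y)).getD 0)
  have h3 : (Finset.Icc 1 (Δmax + 1)).card = Δmax + 1 := by
    rw [Nat.card_Icc]; omega
  omega

lemma mem_availF (x : V) (β : ℕ) :
    β ∈ ((Finset.Icc 1 (Δmax + 1)).filter
      (fun κ => ∀ y ∈ G.neighborFinset x, c s(x, y) ≠ some κ)) ↔ β ∈ avail G Δmax c x := by
  simp [avail, Finset.mem_filter, SimpleGraph.mem_neighborFinset, Set.mem_setOf_eq]

lemma avail_nonempty (hdeg : ∀ x, G.degree x ≤ Δmax) (x : V) :
    ∃ β, β ∈ avail G Δmax c x := by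
  classical
  have hfil : ((G.neighborFinset x).filter (fun y => (c s(x, y)).isSome)).card ≤ Δmax := by
    calc ((G.neighborFinset x).filter (fun y => (c s(x, y)).isSome)).card
        ≤ (G.neighborFinset x).card := Finset.card_filter_le _ _
      _ = G.degree x := rfl
      _ ≤ Δmax := hdeg x
  have h1 := availF_card_ge G Δmax c x 1 (Nat.add_le_add_right hfil 1)
  obtain ⟨β, hβ⟩ := Finset.card_pos.mp (lt_of_lt_of_le Nat.zero_lt_one h1)
  exact ⟨β, (mem_availF G Δmax c x β).mp hβ⟩

lemma avail_exists_ne (hdeg : ∀ x, G.degree x ≤ Δmax) (u v : V) (huv : G.Adj u v)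
    (hunc : c s(u, v) = none) (κ2 : ℕ) :
    ∃ β, β ∈ avail G Δmax c v ∧ β ≠ κ2 := by
  classical
  have hvu : s(v, u) = s(u, v) := Sym2.eq_swap
  have husub : (G.neighborFinset v).filter (fun y => (c s(v, y)).isSome) ⊆
      (G.neighborFinset v).erase u := by
    intro y hy
    rw [Finset.mem_filter] at hy
    refine Finset.mem_erase.mpr ⟨?_, hy.1⟩
    rintro rfl
    rw [hvu, hunc] at hy
    simp at hy
  have hdegv : 1 ≤ G.degree v := by
    rw [← SimpleGraph.card_neighborFinset_eq_degree]
    refine Finset.card_pos.mpr ⟨u, ?_⟩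
    rw [SimpleGraph.mem_neighborFinset]
    exact huv.symm
  have hcard : ((G.neighborFinset v).filter (fun y => (c s(v, y)).isSome)).card ≤
      G.degree v - 1 := by
    have := Finset.card_le_card husub
    have hu : u ∈ G.neighborFinset v := by
      rw [SimpleGraph.mem_neighborFinset]; exact huv.symm
    have he : ((G.neighborFinset v).erase u).card = G.degree v - 1 := by
      rw [Finset.card_erase_of_mem hu]
      rfl
    omega
  have hd := hdeg v
  have hfin : ((G.neighborFinset v).filter (fun y => (c s(v, y)).isSome)).card + 2 ≤
      Δmax + 1 := by omega
  have h2 := availF_card_ge G Δmax c v 2 hfin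
  obtain ⟨β, hβ, hβne⟩ := Finset.exists_mem_ne (lt_of_lt_of_le one_lt_two h2) κ2
  exact ⟨β, (mem_availF G Δmax c v β).mp hβ, hβne⟩

lemma second_fan_aux (hdeg : ∀ x, G.degree x ≤ Δmax)
    (u v : V) (huv : G.Adj u v) (hunc : c s(u, v) = none) (κ2 : ℕ) :
    ∀ n k (w : ℕ → V) (α : ℕ → ℕ),
      Δmax + 1 ≤ k + n → 1 ≤ k →
      (∀ i j, 1 ≤ i → i < j → j ≤ k → w i ≠ w j) →
      (∀ i, 1 ≤ i → i ≤ k → G.Adj u (w i)) →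
      w 1 = v →
      (∀ i, 1 ≤ i → i ≤ k - 1 → α i ∈ avail G Δmax c (w i)) →
      (∀ i, 1 ≤ i → i ≤ k - 1 → α i ≠ κ2) →
      (∀ i j, 1 ≤ i → i < j → j ≤ k - 1 → α i ≠ α j) →
      (∀ i, 1 ≤ i → i ≤ k - 1 → c s(u, w (i + 1)) = some (α i)) →
      ∃ (k' : ℕ) (w' : ℕ → V) (α' : ℕ → ℕ),
        1 ≤ k' ∧
        (∀ i j, 1 ≤ i → i < j → j ≤ k' → w' i ≠ w' j) ∧
        (∀ i, 1 ≤ i → i ≤ k' → G.Adj u (w' i)) ∧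
        w' 1 = v ∧
        (∀ i, 1 ≤ i → i ≤ k' → α' i ∈ avail G Δmax c (w' i)) ∧
        (∀ i, 1 ≤ i → i ≤ k' - 1 → α' i ≠ κ2) ∧
        (∀ i, 1 ≤ i → i ≤ k' - 1 → c s(u, w' (i + 1)) = some (α' i)) ∧
        (α' k' ∈ avail G Δmax c u ∨
          (∃ j, 1 ≤ j ∧ j < k' ∧ α' k' = α' j) ∨
          (α' k' = κ2 ∧ w' k' ≠ v ∧ ∀ i, 1 ≤ i → i ≤ k' → c s(u, w' i) ≠ some κ2)) := by
  intro n
  induction n with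
  | zero =>
    intro k w α hn hk hdist hadj hw1 havail hne hαdist hedge
    exfalso
    have hmaps : ∀ i ∈ Finset.Icc 1 k, w i ∈ G.neighborFinset u := fun i hi => by
      rw [Finset.mem_Icc] at hi
      rw [SimpleGraph.mem_neighborFinset]
      exact hadj i hi.1 hi.2
    have hinj : Set.InjOn w (Finset.Icc 1 k) := by
      intro i hi j hj hij
      simp only [Finset.coe_Icc, Set.mem_Icc] at hi hj
      rcases lt_trichotomy i j with h | h | h
      · exact absurd hij (hdist i j hi.1 h hj.2)
      · exact h
      · exact absurd hij.symm (hdist j i hj.1 h hi.2)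
    have hle := Finset.card_le_card_of_injOn w hmaps hinj
    have hcard : (Finset.Icc 1 k).card = k := by rw [Nat.card_Icc]; omega
    have hdu : (G.neighborFinset u).card = G.degree u := rfl
    have := hdeg u
    omega
  | succ n ih =>
    intro k w α hn hk hdist hadj hw1 havail hne hαdist hedge
    obtain ⟨β, hβ, hβκ⟩ : ∃ β, β ∈ avail G Δmax c (w k) ∧ (k = 1 → β ≠ κ2) := by
      by_cases hk1 : k = 1
      · obtain ⟨β, h1, h2⟩ := avail_exists_ne G Δmax c hdeg u v huv hunc κ2
        exact ⟨β, by rw [hk1, hw1]; exact h1, fun _ => h2⟩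
      · obtain ⟨β, h1⟩ := avail_nonempty G Δmax c hdeg (w k)
        exact ⟨β, h1, fun h => absurd h hk1⟩
    by_cases h1 : β ∈ avail G Δmax c u
    · refine ⟨k, w, fun i => if i = k then β else α i, hk, hdist, hadj, hw1, ?_, ?_, ?_,
        Or.inl (by simpa using h1)⟩
      · intro i hi hik
        by_cases hik' : i = k
        · subst hik'; simpa using hβ
        · simpa [hik'] using havail i hi (by omega)
      · intro i hi hik
        have hik' : i ≠ k := by omega
        simpa [hik'] using hne i hi hik
      · intro i hi hik
        have hik' : i ≠ k := by omega
        simpa [hik'] using hedge i hi hik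
    · by_cases h2 : ∃ j, 1 ≤ j ∧ j ≤ k - 1 ∧ β = α j
      · obtain ⟨j, hj1, hj2, hj3⟩ := h2
        refine ⟨k, w, fun i => if i = k then β else α i, hk, hdist, hadj, hw1, ?_, ?_, ?_,
          Or.inr (Or.inl ⟨j, hj1, by omega, ?_⟩)⟩
        · intro i hi hik
          by_cases hik' : i = k
          · subst hik'; simpa using hβ
          · simpa [hik'] using havail i hi (by omega)
        · intro i hi hik
          have hik' : i ≠ k := by omega
          simpa [hik'] using hne i hi hik
        · intro i hi hik
          have hik' : i ≠ k := by omega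
          simpa [hik'] using hedge i hi hik
        · have hjk : j ≠ k := by omega
          simpa [hjk] using hj3
      · by_cases h3 : β = κ2
        · have hk2 : 2 ≤ k := by
            rcases Nat.lt_or_ge k 2 with h | h
            · exact absurd h3 (hβκ (by omega))
            · exact h
          refine ⟨k, w, fun i => if i = k then β else α i, hk, hdist, hadj, hw1, ?_, ?_, ?_,
            Or.inr (Or.inr ⟨by simpa using h3, ?_, ?_⟩)⟩
          · intro i hi hik
            by_cases hik' : i = k
            · subst hik'; simpa using hβ
            · simpa [hik'] using havail i hi (by omega)
          · intro i hi hik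
            have hik' : i ≠ k := by omega
            simpa [hik'] using hne i hi hik
          · intro i hi hik
            have hik' : i ≠ k := by omega
            simpa [hik'] using hedge i hi hik
          · rw [← hw1]
            exact (hdist 1 k le_rfl (by omega) le_rfl).symm
          · intro i hi hik
            rcases Nat.eq_or_lt_of_le hi with h | h
            · rw [← h, hw1, hunc]; simp
            · have hed := hedge (i - 1) (by omega) (by omega)
              rw [show i - 1 + 1 = i by omega] at hed
              rw [hed]
              have := hne (i - 1) (by omega) (by omega)
              simpa using this
        · -- extend the fan
          push_neg at h2
          have hβIcc : β ∈ Finset.Icc 1 (Δmax + 1) := hβ.1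
          obtain ⟨y, hyadj, hyc⟩ : ∃ y, G.Adj u y ∧ c s(u, y) = some β := by
            by_contra hcon
            push_neg at hcon
            exact h1 ⟨hβIcc, fun y hy hc => hcon y hy hc⟩
          have hynew : ∀ i, 1 ≤ i → i ≤ k → y ≠ w i := by
            intro i hi hik heq
            rcases Nat.eq_or_lt_of_le hi with h | h
            · rw [heq, ← h, hw1, hunc] at hyc
              cases hyc
            · have hed := hedge (i - 1) (by omega) (by omega)
              rw [show i - 1 + 1 = i by omega] at hed
              rw [heq, hed] at hyc
              exact h2 (i - 1) (by omega) (by omega) (Option.some.inj hyc).symm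
          refine ih (k + 1) (fun i => if i = k + 1 then y else w i)
            (fun i => if i = k then β else α i) (by omega) (by omega) ?_ ?_ ?_ ?_ ?_ ?_ ?_
          · intro i j hi hij hjk
            by_cases hj : j = k + 1
            · have hik1 : i ≠ k + 1 := by omega
              subst hj
              simpa [hik1] using (hynew i hi (by omega)).symm
            · have hik1 : i ≠ k + 1 := by omega
              simpa [hik1, hj] using hdist i j hi hij (by omega)
          · intro i hi hik
            by_cases hik' : i = k + 1
            · simpa [hik'] using hyadj
            · simpa [hik'] using hadj i hi (by omega)
          · have : (1 : ℕ) ≠ k + 1 := by omega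
            simpa [this, show k ≠ 0 by omega] using hw1
          · intro i hi hik
            have hik1 : i ≠ k + 1 := by omega
            by_cases hik' : i = k
            · subst hik'; simpa [hik1] using hβ
            · have hik2 : i ≤ k - 1 := by omega
              simpa [hik1, hik'] using havail i hi hik2
          · intro i hi hik
            by_cases hik' : i = k
            · subst hik'; simpa using h3
            · simpa [hik'] using hne i hi (by omega)
          · intro i j hi hij hjk
            by_cases hj : j = k
            · have hik' : i ≠ k := by omega
              subst hj
              simpa [hik'] using (h2 i hi (by omega)).symm
            · have hik' : i ≠ k := by omega
              simpa [hik', hj] using hαdist i j hi hij (by omega)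
          · intro i hi hik
            by_cases hik' : i = k
            · subst hik'
              simpa using hyc
            · have h1' : i + 1 ≠ k + 1 := by omega
              simpa [hik', h1'] using hedge i hi (by omega)

end Aux

theorem second_fan_exists {V : Type*} [Fintype V] [DecidableEq V]
    (G : SimpleGraph V) [DecidableRel G.Adj] (Δmax : ℕ)
    (hdeg : ∀ x, G.degree x ≤ Δmax)
    (c : Sym2 V → Option ℕ)
    (hrange : ∀ x y κ, G.Adj x y → c s(x, y) = some κ → κ ∈ Finset.Icc 1 (Δmax + 1))
    (hproper : ProperPartial G c)
    (u v : V) (huv : G.Adj u v) (hunc : c s(u, v) = none)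
    (κ1 κ2 : ℕ) (hκ1 : κ1 ∈ avail G Δmax c u) (hκ2 : κ2 ∈ avail G Δmax c v) :
    ∃ (k : ℕ) (w : ℕ → V) (α : ℕ → ℕ),
      1 ≤ k ∧
      (∀ i j, 1 ≤ i → i < j → j ≤ k → w i ≠ w j) ∧
      (∀ i, 1 ≤ i → i ≤ k → G.Adj u (w i)) ∧
      w 1 = v ∧
      (∀ i, 1 ≤ i → i ≤ k → α i ∈ avail G Δmax c (w i)) ∧
      (∀ i, 1 ≤ i → i ≤ k - 1 → α i ≠ κ2) ∧
      (∀ i, 1 ≤ i → i ≤ k - 1 → c s(u, w (i + 1)) = some (α i)) ∧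
      (α k ∈ avail G Δmax c u ∨
        (∃ j, 1 ≤ j ∧ j < k ∧ α k = α j) ∨
        (α k = κ2 ∧ w k ≠ v ∧ ∀ i, 1 ≤ i → i ≤ k → c s(u, w i) ≠ some κ2)) := by
  classical
  exact second_fan_aux G Δmax c hdeg u v huv hunc κ2 Δmax 1 (fun _ => v) (fun _ => 0)
    (by omega) le_rfl
    (fun i j hi hij hj => absurd hij (by omega))
    (fun i _ _ => huv)
    rfl
    (fun i hi hik => absurd hik (by omega))
    (fun i hi hik => absurd hik (by omega))
    (fun i j hi hij hjk => absurd hjk (by omega))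
    (fun i hi hik => absurd hik (by omega))
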